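/- Let X be a Hausdorff hemicompact topological space that is a Tanaka space. Then X has at least one point admitting a compact neighborhood. -/

import Mathlib

open Filter Topology Set

variable {X : Type*}

/-- A sequence `x` meshes with a filter `H` if every tail of the sequence meets every
member of `H`. -/
def SeqMeshes (x : ℕ → X) (H : Filter X) : Prop :=
  ∀ B ∈ H, ∀ k : ℕ, ∃ n ≥ k, x n ∈ B

/-- The adherence of a filter: the intersection of the closures of its members. -/
def adh [TopologicalSpace X] (H : Filter X) : Set X :=
  ⋂ A ∈ H, closure A

/-- A hemicompact space. -/
def Hemicompact (X : Type*) [TopologicalSpace X] : Prop :=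
  ∃ K : ℕ → Set X, (∀ n, IsCompact (K n)) ∧ ∀ C : Set X, IsCompact C → ∃ n, C ⊆ K n

/-- A Tanaka space. -/
def TanakaSpace (X : Type*) [TopologicalSpace X] : Prop :=
  ∀ H : Filter X, H.IsCountablyGenerated → (adh H).Nonempty →
    ∃ (x : ℕ → X) (l : X), Tendsto x atTop (𝓝 l) ∧ SeqMeshes x H

theorem stmt0 [TopologicalSpace X] [T2Space X] [Nonempty X]
    (hhemi : Hemicompact X) (htanaka : TanakaSpace X) :
    ∃ (x : X) (K : Set X), K ∈ 𝓝 x ∧ IsCompact K := by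
  by_contra hcon
  push_neg at hcon
  obtain ⟨K, hKc, hKcov⟩ := hhemi
  -- monotone exhaustion
  set L : ℕ → Set X := Set.accumulate K with hL
  have hLc : ∀ n, IsCompact (L n) := fun n => by
    apply Set.Finite.isCompact_biUnion (Set.finite_Iic n)
    intro i _; exact hKc i
  have hLcov : ∀ C : Set X, IsCompact C → ∃ n, C ⊆ L n := by
    intro C hC
    obtain ⟨n, hn⟩ := hKcov C hC
    exact ⟨n, hn.trans (Set.subset_accumulate)⟩
  have hLmono : Monotone L := Set.monotone_accumulate
  -- each L n has empty interior
  have hint : ∀ n, interior (L n) = ∅ := by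
    intro n
    by_contra h
    obtain ⟨x, hx⟩ := Set.nonempty_iff_ne_empty.2 h
    exact hcon x (L n) (mem_interior_iff_mem_nhds.1 hx) (hLc n)
  have hdense : ∀ n, Dense (L n)ᶜ := fun n =>
    interior_eq_empty_iff_dense_compl.1 (hint n)
  -- the filter generated by complements of L n
  set H : Filter X := ⨅ n, 𝓟 (L n)ᶜ with hH
  have hdir : Directed (· ≥ ·) (fun n => (𝓟 (L n)ᶜ : Filter X)) := by
    intro m n
    refine ⟨max m n, ?_, ?_⟩ <;>
      exact principal_mono.2 (Set.compl_subset_compl.2 (hLmono (by simp)))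
  have hmem : ∀ A : Set X, A ∈ H ↔ ∃ n, (L n)ᶜ ⊆ A := by
    intro A
    rw [hH, Filter.mem_iInf_of_directed hdir]
    simp [Filter.mem_principal]
  have hcg : H.IsCountablyGenerated := by
    rw [hH]; infer_instance
  have hadh : (adh H).Nonempty := by
    obtain ⟨x⟩ := ‹Nonempty X›
    refine ⟨x, ?_⟩
    simp only [adh, Set.mem_iInter]
    intro A hA
    obtain ⟨n, hn⟩ := (hmem A).1 hA
    have : closure (L n)ᶜ ⊆ closure A := closure_mono hn
    rw [(hdense n).closure_eq] at this
    exact this (Set.mem_univ x)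
  obtain ⟨x, l, hxl, hmesh⟩ := htanaka H hcg hadh
  have hC : IsCompact (insert l (Set.range x)) := hxl.isCompact_insert_range
  obtain ⟨m, hm⟩ := hLcov _ hC
  obtain ⟨n, -, hn⟩ := hmesh (L m)ᶜ ((hmem _).2 ⟨m, subset_rfl⟩) 0
  exact hn (hm (Set.mem_insert_of_mem _ (Set.mem_range_self n)))
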